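/- For all integers n ≥ 2 and k ≥ 0, setting A = (n·(H(2k+1)+1) + 2·P(2k+1))/2, B = (n·(H(2k+1)−1) + 2·P(2k+1))/2 and D = n·P(2k) + H(2k) (the first two entries and the small weight of the class A_{1,n+1}^{(k)}), one has D·S(n,k)/(A + L(n,k)·B) = √(S(n,k)/(2·L(n,k))); that is, the obstruction Γ from A_{1,n+1}^{(k)} evaluated at the accumulation point S(n,k) with aspect ratio L(n,k) equals the volume bound. -/

import Mathlib

/-- Pell numbers: P 0 = 0, P 1 = 1, P (m+2) = 2·P (m+1) + P m. -/
def pell : ℕ → ℕ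
  | 0 => 0
  | 1 => 1
  | m + 2 => 2 * pell (m + 1) + pell m

/-- Half-companion Pell numbers: H 0 = 1, H 1 = 1, H (m+2) = 2·H (m+1) + H m. -/
def hpell : ℕ → ℕ
  | 0 => 1
  | 1 => 1
  | m + 2 => 2 * hpell (m + 1) + hpell m

/-- √(n²−1). -/
noncomputable def sqn (n : ℕ) : ℝ := Real.sqrt ((n : ℝ)^2 - 1)

/-- L(n,k) = (H(2k)·(√(n²−1)+1) + 2n·P(2k) + (√(n²−1)−1)) /
(H(2k)·(√(n²−1)+1) + 2n·P(2k) − (√(n²−1)−1)). -/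
noncomputable def L (n k : ℕ) : ℝ :=
  ((hpell (2*k) : ℝ) * (sqn n + 1) + 2*n*(pell (2*k) : ℝ) + (sqn n - 1)) /
  ((hpell (2*k) : ℝ) * (sqn n + 1) + 2*n*(pell (2*k) : ℝ) - (sqn n - 1))

/-- S(n,0) = (√(n²−1)+1+n)/(√(n²−1)+1−n); for k ≥ 1,
S(n,k) = ((√(n²−1)+1)·P(2k+1) + n·H(2k+1)) / ((√(n²−1)+1)·P(2k−1) + n·H(2k−1)). -/
noncomputable def S (n k : ℕ) : ℝ :=
  if k = 0 then (sqn n + 1 + n) / (sqn n + 1 - n)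
  else ((sqn n + 1) * (pell (2*k+1) : ℝ) + n * (hpell (2*k+1) : ℝ)) /
       ((sqn n + 1) * (pell (2*k-1) : ℝ) + n * (hpell (2*k-1) : ℝ))

lemma pell_hpell_step : ∀ m, pell (m+1) = pell m + hpell m ∧ hpell (m+1) = 2 * pell m + hpell m := by
  intro m
  induction m with
  | zero => simp [pell, hpell]
  | succ j ih =>
    obtain ⟨h1, h2⟩ := ih
    have e1 : pell (j+1+1) = 2 * pell (j+1) + pell j := rfl
    have e2 : hpell (j+1+1) = 2 * hpell (j+1) + hpell j := rfl
    omega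

lemma hpell_ge_one : ∀ m, 1 ≤ hpell m := by
  intro m
  induction m with
  | zero => simp [hpell]
  | succ j ih =>
    have := (pell_hpell_step j).2
    omega

lemma pell_succ_ge_one (m : ℕ) : 1 ≤ pell (m+1) := by
  have := (pell_hpell_step m).1
  have := hpell_ge_one m
  omega

lemma hpell_sq : ∀ m, (hpell m : ℤ)^2 = 2 * (pell m : ℤ)^2 + (-1)^m := by
  intro m
  induction m with
  | zero => simp [pell, hpell]
  | succ j ih =>
    have h1 : (pell (j+1) : ℤ) = pell j + hpell j := by exact_mod_cast (pell_hpell_step j).1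
    have h2 : (hpell (j+1) : ℤ) = 2 * pell j + hpell j := by exact_mod_cast (pell_hpell_step j).2
    rw [h1, h2]
    ring_nf
    linear_combination (-1:ℤ) * ih

lemma sqrt_helper (D Sn Sd Ln Ld A B : ℝ) (hD : 0 < D) (hSn : 0 < Sn) (hSd : 0 < Sd)
    (hLn : 0 < Ln) (hLd : 0 < Ld) (hA : 0 < A) (hB : 0 < B)
    (core : (A*Ld + B*Ln)^2 * Sd = 2*Ln*Ld*D^2*Sn) :
    D * (Sn/Sd) / (A + (Ln/Ld) * B) = Real.sqrt ((Sn/Sd) / (2 * (Ln/Ld))) := by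
  have hT : 0 < A*Ld + B*Ln := by positivity
  have e1 : D * (Sn/Sd) / (A + (Ln/Ld) * B) = (D*Sn*Ld) / (Sd*(A*Ld + B*Ln)) := by
    rw [show A + (Ln/Ld) * B = (A*Ld + B*Ln)/Ld by field_simp]
    field_simp
  have e2 : (Sn/Sd) / (2 * (Ln/Ld)) = (Sn*Ld) / (Sd*(2*Ln)) := by
    field_simp
  rw [e1, e2]
  have h3 : (Sn*Ld) / (Sd*(2*Ln)) = ((D*Sn*Ld) / (Sd*(A*Ld + B*Ln)))^2 := by
    rw [div_pow, div_eq_div_iff (by positivity) (by positivity)]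
    linear_combination (Sn*Ld*Sd) * core
  rw [h3, Real.sqrt_sq (by positivity)]

lemma key (nr s p h : ℝ) (hn : 2 ≤ nr) (hs2 : s^2 = nr^2 - 1) (hs0 : 0 ≤ s)
    (hh2 : h^2 = 2*p^2 + 1) (hp : 0 ≤ p) (hh : 1 ≤ h)
    (hSd : 0 < (s+1)*(h-p) + nr*(2*p-h)) :
    (nr*p + h) * (((s+1)*(p+h) + nr*(2*p+h)) / ((s+1)*(h-p) + nr*(2*p-h))) /
      ((nr*((2*p+h)+1) + 2*(p+h))/2 +
        ((h*(s+1) + 2*nr*p + (s-1)) / (h*(s+1) + 2*nr*p - (s-1))) * ((nr*((2*p+h)-1) + 2*(p+h))/2)) =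
    Real.sqrt ((((s+1)*(p+h) + nr*(2*p+h)) / ((s+1)*(h-p) + nr*(2*p-h))) /
      (2 * ((h*(s+1) + 2*nr*p + (s-1)) / (h*(s+1) + 2*nr*p - (s-1))))) := by
  have hs1 : 1 < s := by nlinarith
  have hD : 0 < nr*p + h := by nlinarith
  have hSn : 0 < (s+1)*(p+h) + nr*(2*p+h) := by nlinarith
  have hLn : 0 < h*(s+1) + 2*nr*p + (s-1) := by nlinarith
  have hLd : 0 < h*(s+1) + 2*nr*p - (s-1) := by nlinarith
  have hA : 0 < (nr*((2*p+h)+1) + 2*(p+h))/2 := by nlinarith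
  have hB : 0 < (nr*((2*p+h)-1) + 2*(p+h))/2 := by nlinarith
  exact sqrt_helper _ _ _ _ _ _ _ hD hSn hSd hLn hLd hA hB (by
    linear_combination ((-2:ℝ)*h^3 + (6:ℝ)*h^5 + (-2:ℝ)*p*h^2 + (6:ℝ)*p*h^4 + (-12:ℝ)*p^2*h^3 + (-12:ℝ)*p^3*h^2 + (2:ℝ)*s*h^3 + (2:ℝ)*s*h^5 + (2:ℝ)*s*p*h^2 + (2:ℝ)*s*p*h^4 + (-4:ℝ)*s*p^2*h^3 + (-4:ℝ)*s*p^3*h^2 + (-2:ℝ)*nr*h^3 + (6:ℝ)*nr*h^5 + (16:ℝ)*nr*p*h^4 + (-4:ℝ)*nr*p^2*h^3 + (-32:ℝ)*nr*p^3*h^2 + (-16:ℝ)*nr*p^4*h + (-4:ℝ)*nr*s*h^3 + (4:ℝ)*nr*s*h^5 + (4:ℝ)*nr*s*p*h^2 + (4:ℝ)*nr*s*p*h^4 + (8:ℝ)*nr*s*p^2*h + (-8:ℝ)*nr*s*p^2*h^3 + (-8:ℝ)*nr*s*p^3*h^2 + (-1:ℝ)*nr^2*h + (2:ℝ)*nr^2*h^3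 + (-1:ℝ)*nr^2*h^5 + (1:ℝ)*nr^2*p + (-10:ℝ)*nr^2*p*h^2 + (17:ℝ)*nr^2*p*h^4 + (2:ℝ)*nr^2*p^2*h + (18:ℝ)*nr^2*p^2*h^3 + (6:ℝ)*nr^2*p^3 + (-34:ℝ)*nr^2*p^3*h^2 + (-32:ℝ)*nr^2*p^4*h + (1:ℝ)*nr^2*s*h + (-2:ℝ)*nr^2*s*h^3 + (1:ℝ)*nr^2*s*h^5 + (-1:ℝ)*nr^2*s*p + (-2:ℝ)*nr^2*s*p*h^2 + (3:ℝ)*nr^2*s*p*h^4 + (6:ℝ)*nr^2*s*p^2*h + (-2:ℝ)*nr^2*s*p^2*h^3 + (2:ℝ)*nr^2*s*p^3 + (-6:ℝ)*nr^2*s*p^3*h^2 + (-1:ℝ)*nr^3*h + (2:ℝ)*nr^3*h^3 + (-1:ℝ)*nr^3*h^5 + (2:ℝ)*nr^3*p + (-4:ℝ)*nr^3*p*h^2 + (2:ℝ)*nr^3*p*h^4 + (-10:ℝ)*nr^3*p^2*h + (14:ℝ)*nr^3*p^2*h^3 + (12:ℝ)*nr^3*p^3 + (-4:ℝ)*nr^3*p^3*h^2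 + (-24:ℝ)*nr^3*p^4*h) * hs2 + ((-4:ℝ)*h^3 + (-4:ℝ)*p*h^2 + (4:ℝ)*s*h^3 + (4:ℝ)*s*p*h^2 + (-8:ℝ)*nr*h^3 + (-8:ℝ)*nr*p*h^2 + (-4:ℝ)*nr*s*h^3 + (16:ℝ)*nr*s*p*h^2 + (16:ℝ)*nr*s*p^2*h + (-2:ℝ)*nr^2*h + (4:ℝ)*nr^2*h^3 + (2:ℝ)*nr^2*p + (-24:ℝ)*nr^2*p*h^2 + (-8:ℝ)*nr^2*p^2*h + (8:ℝ)*nr^2*p^3 + (2:ℝ)*nr^2*s*h + (-4:ℝ)*nr^2*s*h^3 + (-2:ℝ)*nr^2*s*p + (24:ℝ)*nr^2*s*p^2*h + (8:ℝ)*nr^2*s*p^3 + (6:ℝ)*nr^3*h^3 + (-32:ℝ)*nr^3*p^2*h + (-2:ℝ)*nr^3*s*h + (2:ℝ)*nr^3*s*h^3 + (4:ℝ)*nr^3*s*p + (-8:ℝ)*nr^3*s*p*h^2 + (8:ℝ)*nr^3*s*p^2*h + (16:ℝ)*nr^3*s*p^3 + (1:ℝ)*nr^4*h + (-1:ℝ)*nr^4*h^3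 + (-1:ℝ)*nr^4*p + (13:ℝ)*nr^4*p*h^2 + (-4:ℝ)*nr^4*p^2*h + (-20:ℝ)*nr^4*p^3 + (-1:ℝ)*nr^4*s*h + (1:ℝ)*nr^4*s*h^3 + (1:ℝ)*nr^4*s*p + (-1:ℝ)*nr^4*s*p*h^2 + (-4:ℝ)*nr^4*s*p^2*h + (12:ℝ)*nr^4*s*p^3 + (1:ℝ)*nr^5*h + (-1:ℝ)*nr^5*h^3 + (-2:ℝ)*nr^5*p + (2:ℝ)*nr^5*p*h^2 + (8:ℝ)*nr^5*p^2*h + (-8:ℝ)*nr^5*p^3) * hh2)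

theorem stmt_15 (n k : ℕ) (hn : 2 ≤ n) :
    ((n : ℝ) * (pell (2*k) : ℝ) + (hpell (2*k) : ℝ)) * S n k /
      (((n : ℝ) * ((hpell (2*k+1) : ℝ) + 1) + 2 * (pell (2*k+1) : ℝ)) / 2 +
        L n k * (((n : ℝ) * ((hpell (2*k+1) : ℝ) - 1) + 2 * (pell (2*k+1) : ℝ)) / 2)) =
    Real.sqrt (S n k / (2 * L n k)) := by
  have hn2 : (2:ℝ) ≤ (n:ℝ) := by exact_mod_cast hn
  have hs2 : sqn n ^ 2 = (n:ℝ)^2 - 1 := Real.sq_sqrt (by nlinarith)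
  have hs0 : 0 ≤ sqn n := Real.sqrt_nonneg _
  have hh2 : (hpell (2*k) : ℝ)^2 = 2*(pell (2*k) : ℝ)^2 + 1 := by
    have h1 := hpell_sq (2*k)
    have h2 : ((-1:ℤ))^(2*k) = 1 := by rw [pow_mul]; norm_num
    rw [h2] at h1
    exact_mod_cast h1
  have hP1 : (pell (2*k+1) : ℝ) = (pell (2*k) : ℝ) + (hpell (2*k) : ℝ) := by
    exact_mod_cast (pell_hpell_step (2*k)).1
  have hH1 : (hpell (2*k+1) : ℝ) = 2*(pell (2*k) : ℝ) + (hpell (2*k) : ℝ) := by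
    exact_mod_cast (pell_hpell_step (2*k)).2
  have hp : (0:ℝ) ≤ (pell (2*k) : ℝ) := by positivity
  have hh : (1:ℝ) ≤ (hpell (2*k) : ℝ) := by exact_mod_cast hpell_ge_one (2*k)
  have hS : S n k =
      ((sqn n + 1)*((pell (2*k) : ℝ) + (hpell (2*k) : ℝ)) + (n:ℝ)*(2*(pell (2*k) : ℝ) + (hpell (2*k) : ℝ))) /
      ((sqn n + 1)*((hpell (2*k) : ℝ) - (pell (2*k) : ℝ)) + (n:ℝ)*(2*(pell (2*k) : ℝ) - (hpell (2*k) : ℝ))) := by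
    rcases k with _ | j
    · norm_num [S, pell, hpell]
      ring_nf
    · have i1 : (pell (2*(j+1)) : ℝ) = (pell (2*j+1) : ℝ) + (hpell (2*j+1) : ℝ) := by
        have e : 2*(j+1) = 2*j+1+1 := by ring
        rw [e]; exact_mod_cast (pell_hpell_step (2*j+1)).1
      have i2 : (hpell (2*(j+1)) : ℝ) = 2*(pell (2*j+1) : ℝ) + (hpell (2*j+1) : ℝ) := by
        have e : 2*(j+1) = 2*j+1+1 := by ring
        rw [e]; exact_mod_cast (pell_hpell_step (2*j+1)).2
      have hidx : 2*(j+1)-1 = 2*j+1 := by omega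
      simp only [S, Nat.succ_ne_zero, if_false, hidx]
      rw [hP1, hH1, i1, i2]
      congr 1 <;> ring
  have hSd : 0 < (sqn n + 1)*((hpell (2*k) : ℝ) - (pell (2*k) : ℝ)) + (n:ℝ)*(2*(pell (2*k) : ℝ) - (hpell (2*k) : ℝ)) := by
    rcases k with _ | j
    · norm_num [pell, hpell]
      nlinarith [hs2, hs0, hn2]
    · have i1 : (pell (2*(j+1)) : ℝ) = (pell (2*j+1) : ℝ) + (hpell (2*j+1) : ℝ) := by
        have e : 2*(j+1) = 2*j+1+1 := by ring
        rw [e]; exact_mod_cast (pell_hpell_step (2*j+1)).1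
      have i2 : (hpell (2*(j+1)) : ℝ) = 2*(pell (2*j+1) : ℝ) + (hpell (2*j+1) : ℝ) := by
        have e : 2*(j+1) = 2*j+1+1 := by ring
        rw [e]; exact_mod_cast (pell_hpell_step (2*j+1)).2
      have a1 : (1:ℝ) ≤ (pell (2*j+1) : ℝ) := by exact_mod_cast pell_succ_ge_one (2*j)
      have b1 : (1:ℝ) ≤ (hpell (2*j+1) : ℝ) := by exact_mod_cast hpell_ge_one (2*j+1)
      have e3 : (sqn n + 1)*((hpell (2*(j+1)) : ℝ) - (pell (2*(j+1)) : ℝ)) + (n:ℝ)*(2*(pell (2*(j+1)) : ℝ) - (hpell (2*(j+1)) : ℝ))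
          = (sqn n + 1)*(pell (2*j+1) : ℝ) + (n:ℝ)*(hpell (2*j+1) : ℝ) := by
        rw [i1, i2]; ring
      rw [e3]
      have : (0:ℝ) < (sqn n + 1)*(pell (2*j+1) : ℝ) := by
        apply mul_pos <;> linarith
      nlinarith
  rw [hS, hP1, hH1]
  unfold L
  exact key (n:ℝ) (sqn n) (pell (2*k) : ℝ) (hpell (2*k) : ℝ) hn2 hs2 hs0 hh2 hp hh hSd
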